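/- Let Q = [q_{ij}] be a real n×n matrix satisfying: (P) q_{ij} ≥ 0 for all i ≠ j, and (I) for all indices i and j there exists a sequence (i₁,…,i_m) with i₁ = i, i_m = j, and q_{i_k i_{k+1}} > 0 for k = 1,…,m−1. Then there exist r ∈ ℝ, vectors x*, y* ∈ ℝⁿ with all coordinates strictly positive, and constants C ≥ 0, ε > 0 such that ‖e^{−rt}·x e^{tQ} − ⟨y*, x⟩ x*‖ ≤ C e^{−εt} ‖x‖ for every x ∈ ℝⁿ and all t ≥ 0; in particular lim_{t→∞} e^{−rt} x e^{tQ} = x* ⟨y*, x⟩ for every x ∈ ℝⁿ, with exponential rate of convergence. -/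

import Mathlib

open Matrix Filter

set_option maxHeartbeats 1000000

namespace PFaux

variable {n : ℕ}

noncomputable def entryBound (M : Matrix (Fin n) (Fin n) ℝ) : ℝ :=
  ∑ i, ∑ j, |M i j|

lemma entryBound_nonneg (M : Matrix (Fin n) (Fin n) ℝ) : 0 ≤ entryBound M := by
  apply Finset.sum_nonneg; intro i _; apply Finset.sum_nonneg; intro j _; positivity

lemma abs_le_entryBound (M : Matrix (Fin n) (Fin n) ℝ) (i j : Fin n) :
    |M i j| ≤ entryBound M := by
  calc |M i j| ≤ ∑ j', |M i j'| :=
        Finset.single_le_sum (f := fun j' => |M i j'|) (fun _ _ => abs_nonneg _)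
          (Finset.mem_univ j)
    _ ≤ entryBound M :=
        Finset.single_le_sum (f := fun i' => ∑ j', |M i' j'|)
          (fun _ _ => Finset.sum_nonneg fun _ _ => abs_nonneg _) (Finset.mem_univ i)

lemma pow_entry_abs_le (M : Matrix (Fin n) (Fin n) ℝ) (k : ℕ) (i j : Fin n) :
    |(M ^ k) i j| ≤ (n * entryBound M) ^ k := by
  induction k generalizing i j with
  | zero =>
    simp only [pow_zero, Matrix.one_apply]
    split <;> simp
  | succ k ih =>
    rw [pow_succ']
    calc |(M * M ^ k) i j| = |∑ l, M i l * (M ^ k) l j| := by rw [Matrix.mul_apply]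
      _ ≤ ∑ l, |M i l * (M ^ k) l j| := Finset.abs_sum_le_sum_abs _ _
      _ ≤ ∑ _l : Fin n, entryBound M * (n * entryBound M) ^ k := by
          apply Finset.sum_le_sum; intro l _
          rw [abs_mul]
          exact mul_le_mul (abs_le_entryBound M i l) (ih l j) (abs_nonneg _)
            (entryBound_nonneg M)
      _ = n * entryBound M * (n * entryBound M) ^ k := by
          rw [Finset.sum_const, Finset.card_univ, Fintype.card_fin, nsmul_eq_mul]; ring
      _ = (n * entryBound M) ^ (k + 1) := by rw [pow_succ]; ring

lemma summable_entry (M : Matrix (Fin n) (Fin n) ℝ) (i j : Fin n) :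
    Summable (fun k : ℕ => ((k.factorial : ℝ))⁻¹ * (M ^ k) i j) := by
  refine Summable.of_norm ?_
  refine Summable.of_nonneg_of_le (f := fun k => (n * entryBound M) ^ k / (k.factorial : ℝ))
    (fun k => norm_nonneg _) (fun k => ?_) (Real.summable_pow_div_factorial _)
  rw [norm_mul, norm_inv, Real.norm_natCast]
  show (k.factorial:ℝ)⁻¹ * ‖(M ^ k) i j‖ ≤ (n * entryBound M) ^ k / (k.factorial:ℝ)
  rw [div_eq_inv_mul]
  apply mul_le_mul_of_nonneg_left _ (by positivity)
  rw [Real.norm_eq_abs]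
  exact pow_entry_abs_le M k i j

lemma exp_entry (M : Matrix (Fin n) (Fin n) ℝ) (i j : Fin n) :
    NormedSpace.exp M i j = ∑' k : ℕ, ((k.factorial : ℝ))⁻¹ * (M ^ k) i j := by
  have h1 : NormedSpace.exp M = ∑' k : ℕ, ((k.factorial : ℝ))⁻¹ • M ^ k :=
    congrFun (NormedSpace.exp_eq_tsum ℝ) M
  have hs : ∀ i j, Summable (fun k : ℕ => (((k.factorial : ℝ))⁻¹ • M ^ k) i j) := by
    intro i j
    simpa [Matrix.smul_apply, smul_eq_mul] using summable_entry M i j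
  have hsum : Summable (fun k : ℕ => ((k.factorial : ℝ))⁻¹ • M ^ k) := by
    apply Pi.summable.mpr; intro i
    apply Pi.summable.mpr; intro j
    exact hs i j
  rw [h1, show (∑' k : ℕ, ((k.factorial : ℝ))⁻¹ • M ^ k) i =
      ∑' k : ℕ, (((k.factorial : ℝ))⁻¹ • M ^ k) i from tsum_apply hsum]
  have : Summable (fun k : ℕ => (((k.factorial : ℝ))⁻¹ • M ^ k) i) := by
    apply Pi.summable.mpr; intro j; exact hs i j
  rw [tsum_apply this]
  simp [Matrix.smul_apply, smul_eq_mul]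
lemma pow_entry_nonneg (S : Matrix (Fin n) (Fin n) ℝ) (hS : ∀ i j, 0 ≤ S i j) (k : ℕ) :
    ∀ i j, 0 ≤ (S ^ k) i j := by
  induction k with
  | zero => intro i j; rw [pow_zero]; rw [Matrix.one_apply]; split <;> norm_num
  | succ k ih =>
    intro i j
    rw [pow_succ', Matrix.mul_apply]
    exact Finset.sum_nonneg fun l _ => mul_nonneg (hS i l) (ih l j)

lemma chain_pow_pos (S : Matrix (Fin n) (Fin n) ℝ) (hS : ∀ i j, 0 ≤ S i j) :
    ∀ (k : ℕ) (c : Fin (k + 1) → Fin n),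
      (∀ l : Fin k, 0 < S (c l.castSucc) (c l.succ)) →
      0 < (S ^ k) (c 0) (c (Fin.last k)) := by
  intro k
  induction k with
  | zero =>
    intro c _
    have : c 0 = c (Fin.last 0) := rfl
    rw [← this, pow_zero, Matrix.one_apply_eq]
    norm_num
  | succ k ih =>
    intro c hc
    rw [pow_succ', Matrix.mul_apply]
    have key : 0 < S (c 0) (c 1) * (S ^ k) (c 1) (c (Fin.last (k + 1))) := by
      apply mul_pos
      · have := hc 0
        simpa using this
      · have := ih (fun l => c l.succ) (fun l => by
          have h2 := hc l.succ
          have e1 : (l.succ : Fin (k+1)).castSucc = (l.castSucc).succ := by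
            simp [Fin.castSucc, Fin.succ, Fin.ext_iff]
          rw [e1] at h2
          exact h2)
        simpa [Fin.succ_last] using this
    calc (0:ℝ) < S (c 0) (c 1) * (S ^ k) (c 1) (c (Fin.last (k + 1))) := key
      _ ≤ ∑ l, S (c 0) l * (S ^ k) l (c (Fin.last (k + 1))) := by
          apply Finset.single_le_sum (f := fun l => S (c 0) l * (S ^ k) l (c (Fin.last (k+1))))
            (fun l _ => mul_nonneg (hS _ _) (pow_entry_nonneg S hS k _ _)) (Finset.mem_univ (c 1))

lemma exp_smul_one (b : ℝ) :
    NormedSpace.exp (b • (1 : Matrix (Fin n) (Fin n) ℝ)) = Real.exp b • 1 := by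
  rw [Matrix.smul_one_eq_diagonal, Matrix.exp_diagonal]
  rw [Pi.exp_def]
  have : (fun _ : Fin n => NormedSpace.exp b) = fun _ : Fin n => Real.exp b := by
    funext i; rw [Real.exp_eq_exp_ℝ]
  rw [this, ← Matrix.smul_one_eq_diagonal]

lemma exp_entries_pos (Q : Matrix (Fin n) (Fin n) ℝ)
    (hP : ∀ i j : Fin n, i ≠ j → 0 ≤ Q i j)
    (hI : ∀ i j : Fin n, ∃ (k : ℕ) (c : Fin (k + 1) → Fin n),
      c 0 = i ∧ c (Fin.last k) = j ∧
      ∀ l : Fin k, 0 < Q (c l.castSucc) (c l.succ)) (i j : Fin n) :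
    0 < NormedSpace.exp Q i j := by
  set a : ℝ := entryBound Q + 1 with ha
  set S : Matrix (Fin n) (Fin n) ℝ := Q + a • 1 with hSdef
  have hSnn : ∀ i j, 0 ≤ S i j := by
    intro i j
    by_cases h : i = j
    · subst h
      simp only [hSdef, Matrix.add_apply, Matrix.smul_apply, Matrix.one_apply_eq, smul_eq_mul,
        mul_one]
      have := abs_le_entryBound Q i i
      have := neg_abs_le (Q i i)
      simp only [ha]; linarith
    · simp only [hSdef, Matrix.add_apply, Matrix.smul_apply, Matrix.one_apply_ne h, smul_eq_mul,
        mul_zero, add_zero]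
      exact hP i j h
  -- S chain positivity at (i,j)
  obtain ⟨k, c, hc0, hclast, hcpos⟩ := hI i j
  have hSchain : ∀ l : Fin k, 0 < S (c l.castSucc) (c l.succ) := by
    intro l
    by_cases h : c l.castSucc = c l.succ
    · rw [h]
      have h1 : 0 ≤ Q (c l.succ) (c l.succ) + entryBound Q := by
        have := abs_le_entryBound Q (c l.succ) (c l.succ)
        have := neg_abs_le (Q (c l.succ) (c l.succ))
        linarith
      simp only [hSdef, Matrix.add_apply, Matrix.smul_apply, Matrix.one_apply_eq, smul_eq_mul,
        mul_one, ha]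
      linarith
    · have : 0 < Q (c l.castSucc) (c l.succ) := hcpos l
      simp only [hSdef, Matrix.add_apply, Matrix.smul_apply, Matrix.one_apply_ne h, smul_eq_mul,
        mul_zero, add_zero]
      linarith
  have hSk : 0 < (S ^ k) i j := by
    have := chain_pow_pos S hSnn k c hSchain
    rwa [hc0, hclast] at this
  -- exp S entry positive
  have hexpS : 0 < NormedSpace.exp S i j := by
    rw [exp_entry]
    have hterm : (0:ℝ) < ((k.factorial : ℝ))⁻¹ * (S ^ k) i j := by positivity
    calc (0:ℝ) < ((k.factorial : ℝ))⁻¹ * (S ^ k) i j := hterm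
      _ ≤ ∑' m : ℕ, ((m.factorial : ℝ))⁻¹ * (S ^ m) i j := by
          apply Summable.le_tsum (summable_entry S i j) k
          intro m _
          have := pow_entry_nonneg S hSnn m i j
          positivity
  -- exp S = exp a • exp Q
  have hcomm : Commute Q (a • (1 : Matrix (Fin n) (Fin n) ℝ)) :=
    (Commute.one_right Q).smul_right a
  have hES : NormedSpace.exp S = Real.exp a • NormedSpace.exp Q := by
    rw [hSdef, Matrix.exp_add_of_commute Q (a • 1) hcomm, exp_smul_one]
    rw [Matrix.mul_smul, Matrix.mul_one]
  have := hexpS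
  rw [hES] at this
  simp only [Matrix.smul_apply, smul_eq_mul] at this
  have hea : 0 < Real.exp a := Real.exp_pos a
  nlinarith [this, hea]
section Doeblin

variable (hn : 0 < n)

lemma osc_nonneg (hne : (Finset.univ : Finset (Fin n)).Nonempty) (c : Fin n → ℝ) :
    0 ≤ Finset.univ.sup' hne c - Finset.univ.inf' hne c := by
  obtain ⟨i0, _⟩ := id hne
  have h1 : Finset.univ.inf' hne c ≤ c i0 := Finset.inf'_le c (Finset.mem_univ i0)
  have h2 : c i0 ≤ Finset.univ.sup' hne c := Finset.le_sup' c (Finset.mem_univ i0)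
  linarith

lemma doeblin (hne : (Finset.univ : Finset (Fin n)).Nonempty)
    (P : Matrix (Fin n) (Fin n) ℝ) (ε : ℝ)
    (hP : ∀ i j, ε ≤ P i j) (hrow : ∀ i, ∑ j, P i j = 1)
    (c : Fin n → ℝ) (i k : Fin n) :
    (P *ᵥ c) i - (P *ᵥ c) k ≤ (1 - n * ε) *
      (Finset.univ.sup' hne c - Finset.univ.inf' hne c) := by
  set M := Finset.univ.sup' hne c with hM
  set μ := Finset.univ.inf' hne c with hμ
  set m : Fin n → ℝ := fun j => min (P i j) (P k j) with hm
  set α := ∑ j, m j with hα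
  have hαε : (n : ℝ) * ε ≤ α := by
    rw [hα]
    calc (n:ℝ) * ε = ∑ _j : Fin n, ε := by
          rw [Finset.sum_const, Finset.card_univ, Fintype.card_fin, nsmul_eq_mul]
      _ ≤ ∑ j, m j := Finset.sum_le_sum fun j _ => le_min (hP i j) (hP k j)
  have hMμ : 0 ≤ M - μ := osc_nonneg hne c
  have hPc : ∀ l, (P *ᵥ c) l = ∑ j, P l j * c j := by
    intro l; simp [Matrix.mulVec, dotProduct]
  have h1 : (P *ᵥ c) i ≤ ∑ j, m j * c j + (1 - α) * M := by
    rw [hPc]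
    have e : ∀ j, P i j * c j = m j * c j + (P i j - m j) * c j := by intro j; ring
    rw [Finset.sum_congr rfl fun j _ => e j, Finset.sum_add_distrib]
    have hle : ∑ j, (P i j - m j) * c j ≤ ∑ j, (P i j - m j) * M := by
      apply Finset.sum_le_sum; intro j _
      exact mul_le_mul_of_nonneg_left (Finset.le_sup' c (Finset.mem_univ j))
        (by simp [hm, min_le_left])
    have hsum : ∑ j, (P i j - m j) * M = (1 - α) * M := by
      rw [← Finset.sum_mul, Finset.sum_sub_distrib, hrow i, ← hα]
    linarith
  have h2 : ∑ j, m j * c j + (1 - α) * μ ≤ (P *ᵥ c) k := by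
    rw [hPc]
    have e : ∀ j, P k j * c j = m j * c j + (P k j - m j) * c j := by intro j; ring
    rw [Finset.sum_congr rfl fun j _ => e j, Finset.sum_add_distrib]
    have hle : ∑ j, (P k j - m j) * μ ≤ ∑ j, (P k j - m j) * c j := by
      apply Finset.sum_le_sum; intro j _
      exact mul_le_mul_of_nonneg_left (Finset.inf'_le c (Finset.mem_univ j))
        (by simp [hm, min_le_right])
    have hsum : ∑ j, (P k j - m j) * μ = (1 - α) * μ := by
      rw [← Finset.sum_mul, Finset.sum_sub_distrib, hrow k, ← hα]
    linarith
  nlinarith [h1, h2, hMμ, hαε]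

lemma osc_mulVec_le (hne : (Finset.univ : Finset (Fin n)).Nonempty)
    (P : Matrix (Fin n) (Fin n) ℝ) (ε : ℝ)
    (hP : ∀ i j, ε ≤ P i j) (hrow : ∀ i, ∑ j, P i j = 1)
    (c : Fin n → ℝ) :
    Finset.univ.sup' hne (P *ᵥ c) - Finset.univ.inf' hne (P *ᵥ c) ≤
      (1 - n * ε) * (Finset.univ.sup' hne c - Finset.univ.inf' hne c) := by
  obtain ⟨i, _, hi⟩ := Finset.exists_mem_eq_sup' hne (P *ᵥ c)
  obtain ⟨k, _, hk⟩ := Finset.exists_mem_eq_inf' hne (P *ᵥ c)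
  rw [hi, hk]
  exact doeblin hne P ε hP hrow c i k

end Doeblin
lemma exists_eigen (hn : 0 < n) (A : Matrix (Fin n) (Fin n) ℝ) (hA : ∀ i j, 0 < A i j) :
    ∃ (lam : ℝ) (v : Fin n → ℝ), 0 < lam ∧ (∀ i, 0 < v i) ∧ A *ᵥ v = lam • v := by
  haveI : Nonempty (Fin n) := Fin.pos_iff_nonempty.mp hn
  have hne : (Finset.univ : Finset (Fin n)).Nonempty := Finset.univ_nonempty
  have hne2 : (Finset.univ : Finset (Fin n × Fin n)).Nonempty := Finset.univ_nonempty
  set amin := Finset.univ.inf' hne2 (fun p : Fin n × Fin n => A p.1 p.2) with hamin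
  set amax := Finset.univ.sup' hne2 (fun p : Fin n × Fin n => A p.1 p.2) with hamax
  have haminpos : 0 < amin := by
    rw [hamin, Finset.lt_inf'_iff]
    exact fun p _ => hA p.1 p.2
  have hamin_le : ∀ i j, amin ≤ A i j := fun i j =>
    Finset.inf'_le (fun p : Fin n × Fin n => A p.1 p.2) (Finset.mem_univ (i, j))
  have hamax_ge : ∀ i j, A i j ≤ amax := fun i j =>
    Finset.le_sup' (fun p : Fin n × Fin n => A p.1 p.2) (Finset.mem_univ (i, j))
  have hamaxpos : 0 < amax := by
    obtain ⟨i0⟩ := ‹Nonempty (Fin n)›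
    exact lt_of_lt_of_le (hA i0 i0) (hamax_ge i0 i0)
  -- the feasible set
  set T : Set ((Fin n → ℝ) × ℝ) := {p | (∀ i, 0 ≤ p.1 i) ∧ (∑ i, p.1 i) = 1 ∧ 0 ≤ p.2 ∧
    ∀ i, p.2 * (A *ᵥ p.1) i ≤ (A *ᵥ (A *ᵥ p.1)) i} with hT
  -- basic bounds for simplex vectors
  have hAu_lb : ∀ u : Fin n → ℝ, (∀ i, 0 ≤ u i) → (∑ i, u i) = 1 →
      ∀ i, amin ≤ (A *ᵥ u) i := by
    intro u hu hsum i
    have : (A *ᵥ u) i = ∑ j, A i j * u j := by simp [Matrix.mulVec, dotProduct]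
    rw [this]
    calc amin = amin * ∑ j, u j := by rw [hsum, mul_one]
      _ = ∑ j, amin * u j := by rw [Finset.mul_sum]
      _ ≤ ∑ j, A i j * u j :=
          Finset.sum_le_sum fun j _ => mul_le_mul_of_nonneg_right (hamin_le i j) (hu j)
  have hAu_ub : ∀ u : Fin n → ℝ, (∀ i, 0 ≤ u i) → (∑ i, u i) = 1 →
      ∀ i, (A *ᵥ u) i ≤ amax := by
    intro u hu hsum i
    have : (A *ᵥ u) i = ∑ j, A i j * u j := by simp [Matrix.mulVec, dotProduct]
    rw [this]
    calc ∑ j, A i j * u j ≤ ∑ j, amax * u j :=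
          Finset.sum_le_sum fun j _ => mul_le_mul_of_nonneg_right (hamax_ge i j) (hu j)
      _ = amax * ∑ j, u j := by rw [Finset.mul_sum]
      _ = amax := by rw [hsum, mul_one]
  set Big := n * amax ^ 2 / amin with hBig
  have hBigpos : 0 < Big := by
    apply div_pos _ haminpos
    have : (0:ℝ) < n := by exact_mod_cast hn
    positivity
  have hmemBound : ∀ p ∈ T, p.2 ≤ Big := by
    rintro ⟨u, t⟩ ⟨hu, hsum, ht, hfeas⟩
    obtain ⟨i0⟩ := ‹Nonempty (Fin n)›
    have h1 : t * (A *ᵥ u) i0 ≤ (A *ᵥ (A *ᵥ u)) i0 := hfeas i0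
    have h2 : amin ≤ (A *ᵥ u) i0 := hAu_lb u hu hsum i0
    have h3 : (A *ᵥ (A *ᵥ u)) i0 ≤ n * amax ^ 2 := by
      have : (A *ᵥ (A *ᵥ u)) i0 = ∑ j, A i0 j * (A *ᵥ u) j := by
        simp [Matrix.mulVec, dotProduct]
      rw [this]
      calc ∑ j, A i0 j * (A *ᵥ u) j ≤ ∑ _j : Fin n, amax * amax := by
            apply Finset.sum_le_sum; intro j _
            apply mul_le_mul (hamax_ge i0 j) (hAu_ub u hu hsum j)
            · have := hAu_lb u hu hsum j; linarith
            · exact le_of_lt hamaxpos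
        _ = n * amax ^ 2 := by
            rw [Finset.sum_const, Finset.card_univ, Fintype.card_fin, nsmul_eq_mul]; ring
    have h4 : t * amin ≤ n * amax ^ 2 := by nlinarith
    rw [hBig, le_div_iff₀ haminpos]
    linarith
  -- T is compact
  have hclosed : IsClosed T := by
    have cAu : ∀ i, Continuous fun u : Fin n → ℝ => (A *ᵥ u) i := by
      intro i
      have : (fun u : Fin n → ℝ => (A *ᵥ u) i) = fun u => ∑ j, A i j * u j := by
        funext u; simp [Matrix.mulVec, dotProduct]
      rw [this]
      exact continuous_finset_sum _ fun j _ => continuous_const.mul (continuous_apply j)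
    have cAAu : ∀ i, Continuous fun u : Fin n → ℝ => (A *ᵥ (A *ᵥ u)) i := by
      intro i
      exact (cAu i).comp (continuous_pi cAu)
    have hTeq : T = (⋂ i, {p : (Fin n → ℝ) × ℝ | 0 ≤ p.1 i}) ∩
        ({p : (Fin n → ℝ) × ℝ | ∑ i, p.1 i = 1} ∩
        ({p : (Fin n → ℝ) × ℝ | 0 ≤ p.2} ∩
        (⋂ i, {p : (Fin n → ℝ) × ℝ | p.2 * (A *ᵥ p.1) i ≤ (A *ᵥ (A *ᵥ p.1)) i}))) := by
      ext p
      simp only [hT, Set.mem_setOf_eq, Set.mem_inter_iff, Set.mem_iInter]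
    rw [hTeq]
    refine IsClosed.inter (isClosed_iInter fun i =>
        isClosed_le continuous_const ((continuous_apply i).comp continuous_fst))
      (IsClosed.inter (isClosed_eq (continuous_finset_sum _ fun i _ =>
        (continuous_apply i).comp continuous_fst) continuous_const)
      (IsClosed.inter (isClosed_le continuous_const continuous_snd)
      (isClosed_iInter fun i => isClosed_le
        (continuous_snd.mul ((cAu i).comp continuous_fst))
        ((cAAu i).comp continuous_fst))))
  have hsub : T ⊆ Metric.closedBall 0 (Big + 1) := by
    rintro ⟨u, t⟩ ⟨hu, hsum, ht, hfeas⟩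
    rw [Metric.mem_closedBall, dist_zero_right]
    have hu1 : ‖u‖ ≤ 1 := by
      rw [pi_norm_le_iff_of_nonneg (by norm_num)]
      intro i
      rw [Real.norm_eq_abs, abs_of_nonneg (hu i)]
      calc u i ≤ ∑ j, u j := Finset.single_le_sum (fun j _ => hu j) (Finset.mem_univ i)
        _ = 1 := hsum
    have ht1 : ‖t‖ ≤ Big := by
      rw [Real.norm_eq_abs, abs_of_nonneg ht]
      exact hmemBound (u, t) ⟨hu, hsum, ht, hfeas⟩
    calc ‖((u, t) : (Fin n → ℝ) × ℝ)‖ = max ‖u‖ ‖t‖ := rfl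
      _ ≤ Big + 1 := by
        apply max_le <;> linarith
  have hcomp : IsCompact T :=
    IsCompact.of_isClosed_subset (isCompact_closedBall 0 (Big + 1)) hclosed hsub
  -- T is nonempty
  set u0 : Fin n → ℝ := fun _ => (n : ℝ)⁻¹ with hu0
  have hnR : (0:ℝ) < n := by exact_mod_cast hn
  have hu0nn : ∀ i, 0 ≤ u0 i := fun i => by rw [hu0]; positivity
  have hu0sum : ∑ i, u0 i = 1 := by
    rw [hu0, Finset.sum_const, Finset.card_univ, Fintype.card_fin, nsmul_eq_mul,
      mul_inv_cancel₀ (ne_of_gt hnR)]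
  have hAu0pos : ∀ i, 0 < (A *ᵥ u0) i := fun i =>
    lt_of_lt_of_le haminpos (hAu_lb u0 hu0nn hu0sum i)
  have hAAu0pos : ∀ i, 0 < (A *ᵥ (A *ᵥ u0)) i := by
    intro i
    have : (A *ᵥ (A *ᵥ u0)) i = ∑ j, A i j * (A *ᵥ u0) j := by
      simp [Matrix.mulVec, dotProduct]
    rw [this]
    exact Finset.sum_pos (fun j _ => mul_pos (hA i j) (hAu0pos j)) hne
  set m0 := Finset.univ.inf' hne (fun i => (A *ᵥ (A *ᵥ u0)) i / (A *ᵥ u0) i) with hm0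
  have hm0pos : 0 < m0 := by
    rw [hm0, Finset.lt_inf'_iff]
    exact fun i _ => div_pos (hAAu0pos i) (hAu0pos i)
  have h0T : ((u0, m0) : (Fin n → ℝ) × ℝ) ∈ T := by
    refine ⟨hu0nn, hu0sum, le_of_lt hm0pos, fun i => ?_⟩
    have : m0 ≤ (A *ᵥ (A *ᵥ u0)) i / (A *ᵥ u0) i :=
      Finset.inf'_le _ (Finset.mem_univ i)
    calc m0 * (A *ᵥ u0) i ≤ ((A *ᵥ (A *ᵥ u0)) i / (A *ᵥ u0) i) * (A *ᵥ u0) i :=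
          mul_le_mul_of_nonneg_right this (le_of_lt (hAu0pos i))
      _ = (A *ᵥ (A *ᵥ u0)) i := div_mul_cancel₀ _ (ne_of_gt (hAu0pos i))
  -- maximize
  obtain ⟨pstar, hpT, hmax⟩ := hcomp.exists_isMaxOn ⟨(u0, m0), h0T⟩
    continuous_snd.continuousOn
  obtain ⟨hustar, hsumstar, hlam0, hfeas⟩ := hpT
  set lam := pstar.2 with hlam
  set v := A *ᵥ pstar.1 with hv
  have hlampos : 0 < lam := lt_of_lt_of_le hm0pos (hmax h0T)
  have hvpos : ∀ i, 0 < v i := fun i =>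
    lt_of_lt_of_le haminpos (hAu_lb pstar.1 hustar hsumstar i)
  have hfeasv : ∀ i, lam * v i ≤ (A *ᵥ v) i := hfeas
  refine ⟨lam, v, hlampos, hvpos, ?_⟩
  by_contra hneq
  have hex : ∃ i1, lam * v i1 < (A *ᵥ v) i1 := by
    by_contra hno
    push_neg at hno
    apply hneq
    funext i
    have := le_antisymm (hfeasv i) (hno i)
    rw [Pi.smul_apply, smul_eq_mul]
    exact this.symm
  obtain ⟨i1, hi1⟩ := hex
  set z : Fin n → ℝ := fun j => (A *ᵥ v) j - lam * v j with hz
  have hznn : ∀ j, 0 ≤ z j := fun j => by rw [hz]; simp; linarith [hfeasv j]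
  have hzi1 : 0 < z i1 := by rw [hz]; simp; linarith
  have hAzpos : ∀ i, 0 < (A *ᵥ z) i := by
    intro i
    have he : (A *ᵥ z) i = ∑ j, A i j * z j := by simp [Matrix.mulVec, dotProduct]
    rw [he]
    calc (0:ℝ) < A i i1 * z i1 := mul_pos (hA i i1) hzi1
      _ ≤ ∑ j, A i j * z j :=
          Finset.single_le_sum (f := fun j => A i j * z j)
            (fun j _ => mul_nonneg (le_of_lt (hA i j)) (hznn j)) (Finset.mem_univ i1)
  have hAvpos : ∀ i, 0 < (A *ᵥ v) i := fun i =>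
    lt_of_lt_of_le (mul_pos hlampos (hvpos i)) (hfeasv i)
  set δ := Finset.univ.inf' hne (fun i => (A *ᵥ z) i / (A *ᵥ v) i) with hδ
  have hδpos : 0 < δ := by
    rw [hδ, Finset.lt_inf'_iff]
    exact fun i _ => div_pos (hAzpos i) (hAvpos i)
  set m' := lam + δ with hm'
  set σ := ∑ j, v j with hσ
  have hσpos : 0 < σ := Finset.sum_pos (fun j _ => hvpos j) hne
  set u' : Fin n → ℝ := σ⁻¹ • v with hu'
  have hkey : ∀ i, m' * (A *ᵥ v) i ≤ (A *ᵥ (A *ᵥ v)) i := by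
    intro i
    have hAv_decomp : A *ᵥ (A *ᵥ v) = lam • (A *ᵥ v) + A *ᵥ z := by
      have : (A *ᵥ v) = (lam • v) + z := by
        funext j; rw [hz]; simp [Pi.smul_apply, smul_eq_mul]
      calc A *ᵥ (A *ᵥ v) = A *ᵥ ((lam • v) + z) := by rw [← this]
        _ = lam • (A *ᵥ v) + A *ᵥ z := by rw [Matrix.mulVec_add, Matrix.mulVec_smul]
    have h5 : δ * (A *ᵥ v) i ≤ (A *ᵥ z) i := by
      have : δ ≤ (A *ᵥ z) i / (A *ᵥ v) i := Finset.inf'_le _ (Finset.mem_univ i)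
      calc δ * (A *ᵥ v) i ≤ ((A *ᵥ z) i / (A *ᵥ v) i) * (A *ᵥ v) i :=
            mul_le_mul_of_nonneg_right this (le_of_lt (hAvpos i))
        _ = (A *ᵥ z) i := div_mul_cancel₀ _ (ne_of_gt (hAvpos i))
    have : (A *ᵥ (A *ᵥ v)) i = lam * (A *ᵥ v) i + (A *ᵥ z) i := by
      rw [hAv_decomp]; simp [Pi.smul_apply, smul_eq_mul]
    rw [this, hm']
    nlinarith
  have hmemT : ((u', m') : (Fin n → ℝ) × ℝ) ∈ T := by
    refine ⟨?_, ?_, ?_, ?_⟩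
    · show ∀ i, 0 ≤ u' i
      intro i; rw [hu']; simp only [Pi.smul_apply, smul_eq_mul]
      exact mul_nonneg (inv_nonneg.mpr (le_of_lt hσpos)) (le_of_lt (hvpos i))
    · show ∑ i, u' i = 1
      rw [hu']
      have : ∑ i, (σ⁻¹ • v) i = σ⁻¹ * ∑ i, v i := by
        simp [Pi.smul_apply, smul_eq_mul, Finset.mul_sum]
      rw [this, ← hσ, inv_mul_cancel₀ (ne_of_gt hσpos)]
    · show (0:ℝ) ≤ m'
      rw [hm']; linarith [hlampos, hδpos]
    · show ∀ i, m' * (A *ᵥ u') i ≤ (A *ᵥ (A *ᵥ u')) i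
      intro i
      have e1 : A *ᵥ u' = σ⁻¹ • (A *ᵥ v) := by rw [hu', Matrix.mulVec_smul]
      have e2 : A *ᵥ (A *ᵥ u') = σ⁻¹ • (A *ᵥ (A *ᵥ v)) := by
        rw [e1, Matrix.mulVec_smul]
      rw [e2, e1]
      simp only [Pi.smul_apply, smul_eq_mul]
      have := hkey i
      have hσinv : 0 ≤ σ⁻¹ := by positivity
      calc m' * (σ⁻¹ * (A *ᵥ v) i) = σ⁻¹ * (m' * (A *ᵥ v) i) := by ring
        _ ≤ σ⁻¹ * (A *ᵥ (A *ᵥ v)) i := mul_le_mul_of_nonneg_left this hσinv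
  have : m' ≤ lam := hmax hmemT
  rw [hm'] at this
  linarith
lemma discretePF (hn : 0 < n) (A : Matrix (Fin n) (Fin n) ℝ) (hA : ∀ i j, 0 < A i j) :
    ∃ (lam : ℝ) (v w : Fin n → ℝ) (C θ : ℝ),
      0 < lam ∧ (∀ i, 0 < v i) ∧ (∀ i, 0 < w i) ∧ 0 ≤ C ∧ 0 < θ ∧ θ < 1 ∧
      A *ᵥ v = lam • v ∧ Aᵀ *ᵥ w = lam • w ∧ w ⬝ᵥ v = 1 ∧
      ∀ (x : Fin n → ℝ) (k : ℕ),
        ‖(lam ^ k)⁻¹ • ((A ^ k) *ᵥ x) - (w ⬝ᵥ x) • v‖ ≤ C * θ ^ k * ‖x‖ := by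
  haveI : Nonempty (Fin n) := Fin.pos_iff_nonempty.mp hn
  have hne : (Finset.univ : Finset (Fin n)).Nonempty := Finset.univ_nonempty
  have hne2 : (Finset.univ : Finset (Fin n × Fin n)).Nonempty := Finset.univ_nonempty
  obtain ⟨lam, v, hlampos, hvpos, hAv⟩ := exists_eigen hn A hA
  obtain ⟨mu, u, hmupos, hupos, hATu⟩ := exists_eigen hn Aᵀ (fun i j => hA j i)
  have hlamne : lam ≠ 0 := ne_of_gt hlampos
  -- mu = lam
  have huv : 0 < u ⬝ᵥ v := Finset.sum_pos (fun j _ => mul_pos (hupos j) (hvpos j)) hne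
  have hmu_eq : mu = lam := by
    have e1 : u ⬝ᵥ (A *ᵥ v) = lam * (u ⬝ᵥ v) := by
      rw [hAv]
      simp [dotProduct, Pi.smul_apply, smul_eq_mul, Finset.mul_sum]
      apply Finset.sum_congr rfl; intro j _; ring
    have e2 : u ⬝ᵥ (A *ᵥ v) = mu * (u ⬝ᵥ v) := by
      rw [Matrix.dotProduct_mulVec, ← Matrix.mulVec_transpose, hATu]
      simp [dotProduct, Pi.smul_apply, smul_eq_mul, Finset.mul_sum]
      apply Finset.sum_congr rfl; intro j _; ring
    have := e1.symm.trans e2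
    exact (mul_right_cancel₀ (ne_of_gt huv) this.symm)
  -- normalize w
  set w : Fin n → ℝ := (u ⬝ᵥ v)⁻¹ • u with hwdef
  have hwpos : ∀ i, 0 < w i := fun i => by
    rw [hwdef]; simp only [Pi.smul_apply, smul_eq_mul]
    exact mul_pos (inv_pos.mpr huv) (hupos i)
  have hwv : w ⬝ᵥ v = 1 := by
    rw [hwdef, smul_dotProduct, smul_eq_mul, inv_mul_cancel₀ (ne_of_gt huv)]
  have hATw : Aᵀ *ᵥ w = lam • w := by
    rw [hwdef, Matrix.mulVec_smul, hATu, hmu_eq, smul_comm]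
  -- the stochastic conjugate
  set P : Matrix (Fin n) (Fin n) ℝ :=
    Matrix.of (fun i j => A i j * v j / (lam * v i)) with hPdef
  have hPapply : ∀ i j, P i j = A i j * v j / (lam * v i) := fun i j => rfl
  have hPpos : ∀ i j, 0 < P i j := fun i j => by
    rw [hPapply]
    exact div_pos (mul_pos (hA i j) (hvpos j)) (mul_pos hlampos (hvpos i))
  set ε := Finset.univ.inf' hne2 (fun p : Fin n × Fin n => P p.1 p.2) with hε
  have hεpos : 0 < ε := by
    rw [hε, Finset.lt_inf'_iff]; exact fun p _ => hPpos p.1 p.2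
  have hεle : ∀ i j, ε ≤ P i j := fun i j =>
    Finset.inf'_le (fun p : Fin n × Fin n => P p.1 p.2) (Finset.mem_univ (i, j))
  have hAvi : ∀ i, ∑ j, A i j * v j = lam * v i := by
    intro i
    have := congrFun hAv i
    simpa [Matrix.mulVec, dotProduct, Pi.smul_apply, smul_eq_mul] using this
  have hProw : ∀ i, ∑ j, P i j = 1 := by
    intro i
    have : ∑ j, P i j = (∑ j, A i j * v j) / (lam * v i) := by
      rw [Finset.sum_div]
      exact Finset.sum_congr rfl fun j _ => hPapply i j
    rw [this, hAvi i, div_self (ne_of_gt (mul_pos hlampos (hvpos i)))]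
  set θ : ℝ := max (1 - n * ε) (1 / 2) with hθ
  have hθhalf : (1:ℝ)/2 ≤ θ := le_max_right _ _
  have hθpos : 0 < θ := lt_of_lt_of_le (by norm_num) hθhalf
  have hθlt1 : θ < 1 := by
    apply max_lt
    · have h1 : 0 < (n:ℝ) * ε := mul_pos (by exact_mod_cast hn) hεpos
      linarith
    · norm_num
  have hθge : 1 - n * ε ≤ θ := le_max_left _ _
  -- oscillation contraction for P-powers
  have hosc1 : ∀ c : Fin n → ℝ,
      Finset.univ.sup' hne (P *ᵥ c) - Finset.univ.inf' hne (P *ᵥ c) ≤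
        θ * (Finset.univ.sup' hne c - Finset.univ.inf' hne c) := by
    intro c
    calc Finset.univ.sup' hne (P *ᵥ c) - Finset.univ.inf' hne (P *ᵥ c) ≤
        (1 - n * ε) * (Finset.univ.sup' hne c - Finset.univ.inf' hne c) :=
          osc_mulVec_le hne P ε hεle hProw c
      _ ≤ θ * (Finset.univ.sup' hne c - Finset.univ.inf' hne c) :=
          mul_le_mul_of_nonneg_right hθge (osc_nonneg hne c)
  have hoscpow : ∀ (k : ℕ) (c : Fin n → ℝ),
      Finset.univ.sup' hne ((P ^ k) *ᵥ c) - Finset.univ.inf' hne ((P ^ k) *ᵥ c) ≤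
        θ ^ k * (Finset.univ.sup' hne c - Finset.univ.inf' hne c) := by
    intro k
    induction k with
    | zero => intro c; simp [Matrix.one_mulVec]
    | succ k ih =>
      intro c
      have e : (P ^ (k+1)) *ᵥ c = P *ᵥ ((P ^ k) *ᵥ c) := by
        rw [pow_succ', Matrix.mulVec_mulVec]
      rw [e]
      calc Finset.univ.sup' hne (P *ᵥ ((P ^ k) *ᵥ c)) -
            Finset.univ.inf' hne (P *ᵥ ((P ^ k) *ᵥ c)) ≤
          θ * (Finset.univ.sup' hne ((P ^ k) *ᵥ c) -
            Finset.univ.inf' hne ((P ^ k) *ᵥ c)) := hosc1 _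
        _ ≤ θ * (θ ^ k * (Finset.univ.sup' hne c - Finset.univ.inf' hne c)) :=
            mul_le_mul_of_nonneg_left (ih c) (le_of_lt hθpos)
        _ = θ ^ (k+1) * (Finset.univ.sup' hne c - Finset.univ.inf' hne c) := by ring
  -- conjugation identity
  have hconj : ∀ (k : ℕ) (x : Fin n → ℝ) (i : Fin n),
      ((A ^ k) *ᵥ x) i = lam ^ k * v i * (((P ^ k) *ᵥ (fun j => x j / v j)) i) := by
    intro k
    induction k with
    | zero =>
      intro x i
      simp only [pow_zero, Matrix.one_mulVec, one_mul]
      have hvine : v i ≠ 0 := ne_of_gt (hvpos i)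
      field_simp
    | succ k ih =>
      intro x i
      have e : (A ^ (k+1)) *ᵥ x = A *ᵥ ((A ^ k) *ᵥ x) := by
        rw [pow_succ', Matrix.mulVec_mulVec]
      have e2 : (P ^ (k+1)) *ᵥ (fun j => x j / v j) =
          P *ᵥ ((P ^ k) *ᵥ (fun j => x j / v j)) := by
        rw [pow_succ', Matrix.mulVec_mulVec]
      rw [e, e2]
      have lhs_eq : (A *ᵥ ((A ^ k) *ᵥ x)) i = ∑ j, A i j * ((A ^ k) *ᵥ x) j := by
        simp [Matrix.mulVec, dotProduct]
      have rhs_eq : (P *ᵥ ((P ^ k) *ᵥ (fun j => x j / v j))) i =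
          ∑ j, P i j * ((P ^ k) *ᵥ (fun j => x j / v j)) j := by
        simp [Matrix.mulVec, dotProduct]
      rw [lhs_eq, rhs_eq, Finset.mul_sum]
      apply Finset.sum_congr rfl
      intro j _
      rw [ih x j, hPapply i j]
      have hvine : v i ≠ 0 := ne_of_gt (hvpos i)
      have hvjne : v j ≠ 0 := ne_of_gt (hvpos j)
      field_simp
      ring
  -- invariance of q = w * v under P
  have hAwj : ∀ j, ∑ i, w i * A i j = lam * w j := by
    intro j
    have := congrFun hATw j
    simpa [Matrix.mulVec, dotProduct, Matrix.transpose_apply, Pi.smul_apply,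
      smul_eq_mul, mul_comm] using this
  set q : Fin n → ℝ := fun j => w j * v j with hq
  have hqpos : ∀ j, 0 < q j := fun j => mul_pos (hwpos j) (hvpos j)
  have hqsum : ∑ j, q j = 1 := by
    have : ∑ j, q j = w ⬝ᵥ v := by simp [hq, dotProduct]
    rw [this, hwv]
  have hqP : ∀ d : Fin n → ℝ, q ⬝ᵥ (P *ᵥ d) = q ⬝ᵥ d := by
    intro d
    have e1 : q ⬝ᵥ (P *ᵥ d) = ∑ i, ∑ j, q i * (P i j * d j) := by
      simp [dotProduct, Matrix.mulVec, Finset.mul_sum]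
    rw [e1, Finset.sum_comm]
    have e2 : ∀ j, ∑ i, q i * (P i j * d j) = q j * d j := by
      intro j
      have estep : ∀ i, q i * (P i j * d j) = (w i * A i j) * (v j * d j / lam) := by
        intro i
        simp only [hq, hPapply]
        have hvine : v i ≠ 0 := ne_of_gt (hvpos i)
        field_simp
      rw [Finset.sum_congr rfl fun i _ => estep i, ← Finset.sum_mul, hAwj j]
      simp only [hq]
      field_simp
    rw [Finset.sum_congr rfl fun j _ => e2 j]
    simp [dotProduct]
  have hqPk : ∀ (k : ℕ) (d : Fin n → ℝ), q ⬝ᵥ ((P ^ k) *ᵥ d) = q ⬝ᵥ d := by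
    intro k
    induction k with
    | zero => intro d; simp [Matrix.one_mulVec]
    | succ k ih =>
      intro d
      have e : (P ^ (k+1)) *ᵥ d = (P ^ k) *ᵥ (P *ᵥ d) := by
        rw [pow_succ, ← Matrix.mulVec_mulVec]
      rw [e, ih, hqP]
  have hq_lb : ∀ d : Fin n → ℝ, Finset.univ.inf' hne d ≤ q ⬝ᵥ d := by
    intro d
    calc Finset.univ.inf' hne d = (∑ j, q j) * Finset.univ.inf' hne d := by
          rw [hqsum, one_mul]
      _ = ∑ j, q j * Finset.univ.inf' hne d := by rw [Finset.sum_mul]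
      _ ≤ ∑ j, q j * d j := Finset.sum_le_sum fun j _ =>
          mul_le_mul_of_nonneg_left (Finset.inf'_le d (Finset.mem_univ j))
            (le_of_lt (hqpos j))
      _ = q ⬝ᵥ d := by simp [dotProduct]
  have hq_ub : ∀ d : Fin n → ℝ, q ⬝ᵥ d ≤ Finset.univ.sup' hne d := by
    intro d
    calc q ⬝ᵥ d = ∑ j, q j * d j := by simp [dotProduct]
      _ ≤ ∑ j, q j * Finset.univ.sup' hne d := Finset.sum_le_sum fun j _ =>
          mul_le_mul_of_nonneg_left (Finset.le_sup' d (Finset.mem_univ j))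
            (le_of_lt (hqpos j))
      _ = (∑ j, q j) * Finset.univ.sup' hne d := by rw [Finset.sum_mul]
      _ = Finset.univ.sup' hne d := by rw [hqsum, one_mul]
  set vmin := Finset.univ.inf' hne v with hvmin
  set vmax := Finset.univ.sup' hne v with hvmax
  have hvminpos : 0 < vmin := by
    rw [hvmin, Finset.lt_inf'_iff]; exact fun i _ => hvpos i
  have hvmaxpos : 0 < vmax := by
    obtain ⟨i0⟩ := ‹Nonempty (Fin n)›
    exact lt_of_lt_of_le (hvpos i0) (Finset.le_sup' v (Finset.mem_univ i0))
  have hvminle : ∀ i, vmin ≤ v i := fun i => Finset.inf'_le v (Finset.mem_univ i)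
  have hvmaxge : ∀ i, v i ≤ vmax := fun i => Finset.le_sup' v (Finset.mem_univ i)
  refine ⟨lam, v, w, 2 * vmax / vmin, θ, hlampos, hvpos, hwpos, by positivity,
    hθpos, hθlt1, hAv, hATw, hwv, ?_⟩
  intro x k
  set c : Fin n → ℝ := fun j => x j / v j with hc
  set d : Fin n → ℝ := (P ^ k) *ᵥ c with hd
  have hwx : w ⬝ᵥ x = q ⬝ᵥ d := by
    rw [hd, hqPk]
    simp only [dotProduct, hq, hc]
    apply Finset.sum_congr rfl
    intro j _
    have : v j ≠ 0 := ne_of_gt (hvpos j)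
    field_simp
  have hcoord : ∀ i, ((lam ^ k)⁻¹ • ((A ^ k) *ᵥ x) - (w ⬝ᵥ x) • v) i
      = v i * (d i - q ⬝ᵥ d) := by
    intro i
    simp only [Pi.sub_apply, Pi.smul_apply, smul_eq_mul]
    rw [hconj k x i, hwx]
    have hlk : (lam : ℝ) ^ k ≠ 0 := pow_ne_zero k hlamne
    field_simp
    ring
  have hcb : ∀ j, |c j| ≤ ‖x‖ / vmin := by
    intro j
    rw [hc]
    have h1 : |x j / v j| = |x j| / v j := by
      rw [abs_div, abs_of_pos (hvpos j)]
    rw [h1]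
    apply div_le_div₀ (norm_nonneg x) _ hvminpos (hvminle j)
    calc |x j| = ‖x j‖ := (Real.norm_eq_abs _).symm
      _ ≤ ‖x‖ := norm_le_pi_norm x j
  have hoscc : Finset.univ.sup' hne c - Finset.univ.inf' hne c ≤ 2 * (‖x‖ / vmin) := by
    have h1 : Finset.univ.sup' hne c ≤ ‖x‖ / vmin := by
      apply Finset.sup'_le
      intro j _
      calc c j ≤ |c j| := le_abs_self _
        _ ≤ ‖x‖ / vmin := hcb j
    have h2 : -(‖x‖ / vmin) ≤ Finset.univ.inf' hne c := by
      apply Finset.le_inf'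
      intro j _
      calc -(‖x‖ / vmin) ≤ -|c j| := neg_le_neg (hcb j)
        _ ≤ c j := neg_abs_le _
    linarith
  have hoscd : Finset.univ.sup' hne d - Finset.univ.inf' hne d
      ≤ θ ^ k * (2 * (‖x‖ / vmin)) := by
    calc Finset.univ.sup' hne d - Finset.univ.inf' hne d
        ≤ θ ^ k * (Finset.univ.sup' hne c - Finset.univ.inf' hne c) := hoscpow k c
      _ ≤ θ ^ k * (2 * (‖x‖ / vmin)) :=
          mul_le_mul_of_nonneg_left hoscc (pow_nonneg (le_of_lt hθpos) k)
  have hCid : vmax * (θ ^ k * (2 * (‖x‖ / vmin))) = 2 * vmax / vmin * θ ^ k * ‖x‖ := by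
    field_simp
  rw [pi_norm_le_iff_of_nonneg (by positivity)]
  intro i
  rw [hcoord i, Real.norm_eq_abs, abs_mul, abs_of_pos (hvpos i)]
  have habs : |d i - q ⬝ᵥ d| ≤ Finset.univ.sup' hne d - Finset.univ.inf' hne d := by
    have h1 : d i ≤ Finset.univ.sup' hne d := Finset.le_sup' d (Finset.mem_univ i)
    have h2 : Finset.univ.inf' hne d ≤ d i := Finset.inf'_le d (Finset.mem_univ i)
    have h3 := hq_lb d
    have h4 := hq_ub d
    rw [abs_le]
    constructor <;> linarith
  calc v i * |d i - q ⬝ᵥ d| ≤ vmax * (θ ^ k * (2 * (‖x‖ / vmin))) :=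
        mul_le_mul (hvmaxge i) (le_trans habs hoscd) (abs_nonneg _) (le_of_lt hvmaxpos)
    _ = 2 * vmax / vmin * θ ^ k * ‖x‖ := hCid
lemma simple_of_estimate (A : Matrix (Fin n) (Fin n) ℝ) (lam : ℝ) (hlam : lam ≠ 0)
    (v w : Fin n → ℝ) (C θ : ℝ) (hθ0 : 0 ≤ θ) (hθ1 : θ < 1)
    (hest : ∀ (x : Fin n → ℝ) (k : ℕ),
      ‖(lam ^ k)⁻¹ • ((A ^ k) *ᵥ x) - (w ⬝ᵥ x) • v‖ ≤ C * θ ^ k * ‖x‖)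
    (u : Fin n → ℝ) (hu : A *ᵥ u = lam • u) : u = (w ⬝ᵥ u) • v := by
  have hpow : ∀ k : ℕ, (A ^ k) *ᵥ u = (lam ^ k) • u := by
    intro k
    induction k with
    | zero => simp [Matrix.one_mulVec]
    | succ k ih =>
      have e : (A ^ (k+1)) *ᵥ u = (A ^ k) *ᵥ (A *ᵥ u) := by
        rw [pow_succ, ← Matrix.mulVec_mulVec]
      rw [e, hu, Matrix.mulVec_smul, ih, smul_smul, pow_succ, mul_comm]
  have hb : ∀ k : ℕ, ‖u - (w ⬝ᵥ u) • v‖ ≤ C * θ ^ k * ‖u‖ := by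
    intro k
    have h := hest u k
    rwa [hpow k, smul_smul, inv_mul_cancel₀ (pow_ne_zero k hlam), one_smul] at h
  have htend : Tendsto (fun k : ℕ => C * θ ^ k * ‖u‖) atTop (nhds 0) := by
    have h1 : Tendsto (fun k : ℕ => θ ^ k) atTop (nhds 0) :=
      tendsto_pow_atTop_nhds_zero_of_lt_one hθ0 hθ1
    have h2 := (h1.const_mul C).mul_const ‖u‖
    simpa using h2
  have h0 : ‖u - (w ⬝ᵥ u) • v‖ ≤ 0 := ge_of_tendsto' htend hb
  have := le_antisymm h0 (norm_nonneg _)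
  rw [norm_eq_zero, sub_eq_zero] at this
  exact this

lemma mulVec_norm_le (M : Matrix (Fin n) (Fin n) ℝ) (β : ℝ) (hβ : 0 ≤ β)
    (hM : ∀ i j, |M i j| ≤ β) (x : Fin n → ℝ) : ‖M *ᵥ x‖ ≤ n * β * ‖x‖ := by
  rw [pi_norm_le_iff_of_nonneg (by positivity)]
  intro i
  rw [Real.norm_eq_abs]
  have e : (M *ᵥ x) i = ∑ j, M i j * x j := by simp [Matrix.mulVec, dotProduct]
  rw [e]
  calc |∑ j, M i j * x j| ≤ ∑ j, |M i j * x j| := Finset.abs_sum_le_sum_abs _ _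
    _ ≤ ∑ _j : Fin n, β * ‖x‖ := by
        apply Finset.sum_le_sum
        intro j _
        rw [abs_mul]
        apply mul_le_mul (hM i j) _ (abs_nonneg _) hβ
        calc |x j| = ‖x j‖ := (Real.norm_eq_abs _).symm
          _ ≤ ‖x‖ := norm_le_pi_norm x j
    _ = n * β * ‖x‖ := by
        rw [Finset.sum_const, Finset.card_univ, Fintype.card_fin, nsmul_eq_mul]; ring

lemma exp_smul_entry_bound (Q : Matrix (Fin n) (Fin n) ℝ) (s : ℝ) (hs : |s| ≤ 1)
    (i j : Fin n) :
    |NormedSpace.exp (s • Q) i j| ≤ Real.exp (n * entryBound Q) := by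
  have hB : 0 ≤ (n : ℝ) * entryBound Q := by
    have := entryBound_nonneg Q; positivity
  have hterm : ∀ k : ℕ, |((k.factorial : ℝ))⁻¹ * ((s • Q) ^ k) i j|
      ≤ ((n : ℝ) * entryBound Q) ^ k / (k.factorial : ℝ) := by
    intro k
    rw [smul_pow, Matrix.smul_apply, smul_eq_mul, abs_mul, abs_mul, abs_inv, abs_pow]
    rw [Nat.abs_cast]
    have h1 : |s| ^ k ≤ 1 := pow_le_one₀ (abs_nonneg s) hs
    have h2 : |(Q ^ k) i j| ≤ ((n : ℝ) * entryBound Q) ^ k := pow_entry_abs_le Q k i j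
    have h3 : |s| ^ k * |(Q ^ k) i j| ≤ ((n : ℝ) * entryBound Q) ^ k := by
      calc |s| ^ k * |(Q ^ k) i j| ≤ 1 * ((n : ℝ) * entryBound Q) ^ k :=
            mul_le_mul h1 h2 (abs_nonneg _) (by norm_num)
        _ = ((n : ℝ) * entryBound Q) ^ k := one_mul _
    rw [div_eq_inv_mul]
    exact mul_le_mul_of_nonneg_left h3 (by positivity)
  rw [exp_entry]
  have hsum1 : Summable (fun k : ℕ => |((k.factorial : ℝ))⁻¹ * ((s • Q) ^ k) i j|) := by
    have := (summable_entry (s • Q) i j).abs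
    exact this
  calc |∑' k : ℕ, ((k.factorial : ℝ))⁻¹ * ((s • Q) ^ k) i j|
      ≤ ∑' k : ℕ, |((k.factorial : ℝ))⁻¹ * ((s • Q) ^ k) i j| := by
        have h := norm_tsum_le_tsum_norm (f := fun k : ℕ =>
          ((k.factorial : ℝ))⁻¹ * ((s • Q) ^ k) i j)
          (by simp only [Real.norm_eq_abs]; exact hsum1)
        simp only [Real.norm_eq_abs] at h
        exact h
    _ ≤ ∑' k : ℕ, ((n : ℝ) * entryBound Q) ^ k / (k.factorial : ℝ) :=
        Summable.tsum_le_tsum hterm hsum1 (Real.summable_pow_div_factorial _)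
    _ = Real.exp ((n : ℝ) * entryBound Q) := by
        rw [Real.exp_eq_exp_ℝ]
        rw [NormedSpace.exp_eq_tsum_div]
  done

lemma exp_entry_mono (S : Matrix (Fin n) (Fin n) ℝ) (hS : ∀ i j, 0 ≤ S i j)
    {t t' : ℝ} (h0 : 0 ≤ t) (htt' : t ≤ t') (i j : Fin n) :
    NormedSpace.exp (t • S) i j ≤ NormedSpace.exp (t' • S) i j := by
  rw [exp_entry, exp_entry]
  have hs1 : Summable (fun k : ℕ => ((k.factorial : ℝ))⁻¹ * ((t • S) ^ k) i j) :=
    summable_entry _ i j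
  have hs2 : Summable (fun k : ℕ => ((k.factorial : ℝ))⁻¹ * ((t' • S) ^ k) i j) :=
    summable_entry _ i j
  apply Summable.tsum_le_tsum _ hs1 hs2
  intro k
  simp only [smul_pow, Matrix.smul_apply, smul_eq_mul]
  have hSk : 0 ≤ (S ^ k) i j := pow_entry_nonneg S hS k i j
  have h1 : t ^ k ≤ t' ^ k := pow_le_pow_left₀ h0 htt' k
  have h2 : t ^ k * (S ^ k) i j ≤ t' ^ k * (S ^ k) i j :=
    mul_le_mul_of_nonneg_right h1 hSk
  have h3 : (0:ℝ) ≤ ((k.factorial : ℝ))⁻¹ := by positivity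
  calc ((k.factorial : ℝ))⁻¹ * (t ^ k * (S ^ k) i j)
      ≤ ((k.factorial : ℝ))⁻¹ * (t' ^ k * (S ^ k) i j) :=
        mul_le_mul_of_nonneg_left h2 h3

lemma additive_linear (F : ℝ → ℝ) (hadd : ∀ t s, F (t + s) = F t + F s)
    (hmono : ∀ t t', 0 ≤ t → t ≤ t' → F t ≤ F t') (t : ℝ) (ht : 0 ≤ t) :
    F t = t * F 1 := by
  have hF0 : F 0 = 0 := by
    have := hadd 0 0; simp at this; linarith
  have hnatmul : ∀ (k : ℕ) (x : ℝ), F (k * x) = k * F x := by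
    intro k
    induction k with
    | zero => intro x; simp [hF0]
    | succ k ih =>
      intro x
      have e : ((k:ℝ) + 1) * x = (k:ℝ) * x + x := by ring
      push_cast
      rw [e, hadd, ih]
      ring
  have hfrac : ∀ (p m : ℕ), 0 < m → F ((p:ℝ)/m) = (p:ℝ)/m * F 1 := by
    intro p m hm
    have hmne : ((m:ℝ)) ≠ 0 := by
      have : (0:ℝ) < m := by exact_mod_cast hm
      exact ne_of_gt this
    have h1 : (m:ℝ) * F ((p:ℝ)/m) = F ((m:ℝ) * ((p:ℝ)/m)) := (hnatmul m _).symm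
    have h2 : (m:ℝ) * ((p:ℝ)/m) = (p:ℝ) := by field_simp
    rw [h2] at h1
    have h4 : F (p:ℝ) = (p:ℝ) * F 1 := by
      have := hnatmul p 1; simpa using this
    rw [h4] at h1
    field_simp
    linarith
  have hF1 : 0 ≤ F 1 := by
    have := hmono 0 1 (le_refl 0) (by norm_num)
    linarith [hF0]
  have hFt0 : 0 ≤ F t := by
    have := hmono 0 t (le_refl 0) ht
    linarith [hF0]
  have hdense : ∀ a b : ℝ, 0 ≤ a → a < b → ∃ p m : ℕ, 0 < m ∧ a < (p:ℝ)/m ∧ (p:ℝ)/m < b := by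
    intro a b ha hab
    obtain ⟨m, hm⟩ := exists_nat_gt (1 / (b - a))
    have hbapos : 0 < b - a := by linarith
    have hmpos0 : (0:ℝ) < m := lt_trans (by positivity) hm
    have hmpos : 0 < m := by exact_mod_cast hmpos0
    refine ⟨Nat.floor (a * m) + 1, m, hmpos, ?_, ?_⟩
    · have h1 : a * m < Nat.floor (a * m) + 1 := Nat.lt_floor_add_one (a * m)
      rw [lt_div_iff₀ hmpos0]
      push_cast
      linarith
    · have h2 : (Nat.floor (a * m) : ℝ) ≤ a * m := Nat.floor_le (by positivity)
      have h3 : 1 < (m:ℝ) * (b - a) := by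
        rw [div_lt_iff₀ hbapos] at hm
        linarith
      rw [div_lt_iff₀ hmpos0]
      push_cast
      nlinarith
  have hub : F t ≤ t * F 1 := by
    by_contra h
    push_neg at h
    rcases eq_or_lt_of_le hF1 with hF1eq | hF1pos
    · obtain ⟨N, hN⟩ := exists_nat_ge t
      have h5 : F t ≤ F N := hmono t N ht hN
      have h6 : F (N:ℝ) = (N:ℝ) * F 1 := by
        have := hnatmul N 1; simpa using this
      rw [h6, ← hF1eq] at h5
      rw [← hF1eq] at h
      simp at h5 h
      linarith
    · have htlt : t < F t / F 1 := (lt_div_iff₀ hF1pos).mpr (by linarith)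
      obtain ⟨p, m, hm, h1, h2⟩ := hdense t (F t / F 1) ht htlt
      have h5 : F t ≤ F ((p:ℝ)/m) := hmono t _ ht (le_of_lt h1)
      rw [hfrac p m hm] at h5
      rw [lt_div_iff₀ hF1pos] at h2
      linarith
  have hlb : t * F 1 ≤ F t := by
    by_contra h
    push_neg at h
    rcases eq_or_lt_of_le hF1 with hF1eq | hF1pos
    · rw [← hF1eq] at h
      simp at h
      linarith
    · have htgt : F t / F 1 < t := (div_lt_iff₀ hF1pos).mpr (by linarith)
      obtain ⟨p, m, hm, h1, h2⟩ := hdense (F t / F 1) t (by positivity) htgt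
      have hpm0 : 0 ≤ (p:ℝ)/m := by positivity
      have h5 : F ((p:ℝ)/m) ≤ F t := hmono _ t hpm0 (le_of_lt h2)
      rw [hfrac p m hm] at h5
      rw [div_lt_iff₀ hF1pos] at h1
      linarith
  linarith
end PFaux

open PFaux

/-- **The Perron–Frobenius theorem for matrix semigroups (continuous version).**
Let `Q` be a real `n×n` matrix with nonnegative off-diagonal entries (P) which is
irreducible (I): for all `i, j` there is a chain `i = i₁, …, i_m = j` with
`Q i_k i_{k+1} > 0`.  Then there are `r ∈ ℝ`, strictly positive vectors `x*, y* ∈ ℝⁿ` and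
constants `C ≥ 0`, `ε > 0` such that
`‖e^{−rt}·(x e^{tQ}) − ⟨y*,x⟩ x*‖ ≤ C e^{−εt} ‖x‖` for all `x ∈ ℝⁿ` and `t ≥ 0`;
in particular `e^{−rt} x e^{tQ} → ⟨y*,x⟩ x*` exponentially fast. -/
theorem perron_frobenius_matrix_semigroup
    {n : ℕ} (Q : Matrix (Fin n) (Fin n) ℝ)
    (hP : ∀ i j : Fin n, i ≠ j → 0 ≤ Q i j)
    (hI : ∀ i j : Fin n, ∃ (k : ℕ) (c : Fin (k + 1) → Fin n),
      c 0 = i ∧ c (Fin.last k) = j ∧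
      ∀ l : Fin k, 0 < Q (c l.castSucc) (c l.succ)) :
    ∃ (r : ℝ) (xstar ystar : Fin n → ℝ) (C ε : ℝ),
      (∀ i, 0 < xstar i) ∧ (∀ i, 0 < ystar i) ∧ 0 ≤ C ∧ 0 < ε ∧
      ∀ (x : Fin n → ℝ) (t : ℝ), 0 ≤ t →
        ‖Real.exp (-r * t) • (x ᵥ* NormedSpace.exp (t • Q)) - (ystar ⬝ᵥ x) • xstar‖ ≤
          C * Real.exp (-ε * t) * ‖x‖ := by
  rcases Nat.eq_zero_or_pos n with hn0 | hn
  · subst hn0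
    refine ⟨0, 0, 0, 0, 1, fun i => i.elim0, fun i => i.elim0, le_refl 0, one_pos, ?_⟩
    intro x t _
    have hall : ∀ y : Fin 0 → ℝ, y = 0 := fun y => funext fun i => i.elim0
    rw [hall (Real.exp (-0 * t) • (x ᵥ* NormedSpace.exp (t • Q)) -
      (((0 : Fin 0 → ℝ)) ⬝ᵥ x) • (0 : Fin 0 → ℝ)), norm_zero]
    positivity
  haveI : Nonempty (Fin n) := Fin.pos_iff_nonempty.mp hn
  set B : ℝ → Matrix (Fin n) (Fin n) ℝ := fun t => (NormedSpace.exp (t • Q))ᵀ with hBdef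
  have hBapp : ∀ t, B t = (NormedSpace.exp (t • Q))ᵀ := fun t => rfl
  have hBmul : ∀ t s : ℝ, B t * B s = B (t + s) := by
    intro t s
    rw [hBapp, hBapp, hBapp, ← Matrix.transpose_mul]
    congr 1
    have hc : Commute (s • Q) (t • Q) := ((Commute.refl Q).smul_left s).smul_right t
    rw [← Matrix.exp_add_of_commute _ _ hc]
    congr 1
    rw [← add_smul, add_comm]
  have hB0 : B 0 = 1 := by
    rw [hBapp, zero_smul, NormedSpace.exp_zero, Matrix.transpose_one]
  set A := B 1 with hA
  have hQ1 : (1:ℝ) • Q = Q := one_smul ℝ Q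
  have hApos : ∀ i j, 0 < A i j := by
    intro i j
    rw [hA, hBapp, Matrix.transpose_apply, hQ1]
    exact exp_entries_pos Q hP hI j i
  obtain ⟨lam, v, w, C0, θ, hlampos, hvpos, hwpos, hC0, hθpos, hθlt1, hAv, hATw, hwv, hest⟩ :=
    discretePF hn A hApos
  have hBnat : ∀ k : ℕ, B (k : ℝ) = A ^ k := by
    intro k
    have e1 : ((k:ℝ)) • Q = (k : ℕ) • Q := Nat.cast_smul_eq_nsmul ℝ k Q
    calc B (k:ℝ) = (NormedSpace.exp (((k:ℝ)) • Q))ᵀ := hBapp _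
      _ = (NormedSpace.exp Q ^ k)ᵀ := by rw [e1, Matrix.exp_nsmul]
      _ = ((NormedSpace.exp Q)ᵀ) ^ k := Matrix.transpose_pow _ k
      _ = A ^ k := by rw [hA, hBapp, hQ1]
  have hBA : ∀ t : ℝ, A * B t = B t * A := by
    intro t; rw [hA, hBmul, hBmul, add_comm]
  have hBtv_eigen : ∀ t : ℝ, A *ᵥ (B t *ᵥ v) = lam • (B t *ᵥ v) := by
    intro t
    rw [Matrix.mulVec_mulVec, hBA, ← Matrix.mulVec_mulVec, hAv, Matrix.mulVec_smul]
  set c : ℝ → ℝ := fun t => w ⬝ᵥ (B t *ᵥ v) with hcdef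
  have hcapp : ∀ t, c t = w ⬝ᵥ (B t *ᵥ v) := fun t => rfl
  have hBv : ∀ t : ℝ, B t *ᵥ v = c t • v := fun t =>
    simple_of_estimate A lam (ne_of_gt hlampos) v w C0 θ (le_of_lt hθpos) hθlt1 hest
      _ (hBtv_eigen t)
  have hc0 : c 0 = 1 := by rw [hcapp, hB0, Matrix.one_mulVec, hwv]
  have hc1 : c 1 = lam := by
    rw [hcapp, ← hA, hAv, dotProduct_smul, smul_eq_mul, hwv, mul_one]
  have hcadd : ∀ t s : ℝ, c (t + s) = c t * c s := by
    intro t s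
    have e1 : B (t + s) *ᵥ v = (c (t+s)) • v := hBv _
    have e2 : B (t + s) *ᵥ v = (c t * c s) • v := by
      rw [← hBmul, ← Matrix.mulVec_mulVec, hBv s, Matrix.mulVec_smul, hBv t, smul_smul,
        mul_comm]
    obtain ⟨i0⟩ := ‹Nonempty (Fin n)›
    have h3 := congrFun (e1.symm.trans e2) i0
    simp only [Pi.smul_apply, smul_eq_mul] at h3
    exact mul_right_cancel₀ (ne_of_gt (hvpos i0)) h3
  have hcpos : ∀ t : ℝ, 0 < c t := by
    intro t
    have hne0 : c t ≠ 0 := by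
      intro h
      have h1 := hcadd t (-t)
      rw [add_neg_cancel, hc0, h, zero_mul] at h1
      norm_num at h1
    have hsq : c t = c (t/2) * c (t/2) := by
      rw [← hcadd]; norm_num
    have h2 : c (t/2) ≠ 0 := by
      intro h; rw [hsq, h, mul_zero] at hne0; exact hne0 rfl
    rw [hsq]
    exact mul_self_pos.mpr h2
  -- monotonicity via the nonnegative matrix S
  set a : ℝ := entryBound Q + 1 with hadef
  set S : Matrix (Fin n) (Fin n) ℝ := Q + a • 1 with hSdef
  have hSnn : ∀ i j, 0 ≤ S i j := by
    intro i j
    by_cases h : i = j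
    · subst h
      simp only [hSdef, Matrix.add_apply, Matrix.smul_apply, Matrix.one_apply_eq, smul_eq_mul,
        mul_one]
      have h1 := abs_le_entryBound Q i i
      have h2 := neg_abs_le (Q i i)
      simp only [hadef]; linarith
    · simp only [hSdef, Matrix.add_apply, Matrix.smul_apply, Matrix.one_apply_ne h, smul_eq_mul,
        mul_zero, add_zero]
      exact hP i j h
  have hexp_tS : ∀ t : ℝ, NormedSpace.exp (t • S) =
      Real.exp (t * a) • NormedSpace.exp (t • Q) := by
    intro t
    have e1 : t • S = t • Q + (t * a) • (1 : Matrix (Fin n) (Fin n) ℝ) := by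
      rw [hSdef, smul_add, smul_smul]
    rw [e1, Matrix.exp_add_of_commute _ _ ((Commute.one_right (t • Q)).smul_right (t*a)),
      exp_smul_one, Matrix.mul_smul, Matrix.mul_one]
  set F : ℝ → ℝ := fun t => t * a + Real.log (c t) with hFdef
  have hFapp : ∀ t, F t = t * a + Real.log (c t) := fun t => rfl
  have hFadd : ∀ t s, F (t + s) = F t + F s := by
    intro t s
    rw [hFapp, hFapp, hFapp, hcadd, Real.log_mul (ne_of_gt (hcpos t)) (ne_of_gt (hcpos s))]
    ring
  have hkey : ∀ u : ℝ, Real.exp (u*a) * c u =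
      ∑ j, w j * (∑ i, NormedSpace.exp (u • S) i j * v i) := by
    intro u
    have e1 : c u = ∑ j, w j * (∑ i, NormedSpace.exp (u • Q) i j * v i) := by
      rw [hcapp, hBapp]
      simp [dotProduct, Matrix.mulVec, Matrix.transpose_apply]
    have e2 : ∀ i j, NormedSpace.exp (u • S) i j =
        Real.exp (u*a) * NormedSpace.exp (u • Q) i j := by
      intro i j
      rw [hexp_tS]
      simp [Matrix.smul_apply, smul_eq_mul]
    rw [e1]
    rw [Finset.mul_sum]
    apply Finset.sum_congr rfl
    intro j _
    rw [Finset.mul_sum, Finset.mul_sum]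
    rw [Finset.mul_sum]
    apply Finset.sum_congr rfl
    intro i _
    rw [e2 i j]
    ring
  have hFmono : ∀ t t', 0 ≤ t → t ≤ t' → F t ≤ F t' := by
    intro t t' h0 h1
    have hm : Real.exp (t*a) * c t ≤ Real.exp (t'*a) * c t' := by
      rw [hkey t, hkey t']
      apply Finset.sum_le_sum; intro j _
      apply mul_le_mul_of_nonneg_left _ (le_of_lt (hwpos j))
      apply Finset.sum_le_sum; intro i _
      exact mul_le_mul_of_nonneg_right (exp_entry_mono S hSnn h0 h1 i j)
        (le_of_lt (hvpos i))
    have e3 : ∀ u : ℝ, Real.exp (F u) = Real.exp (u*a) * c u := by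
      intro u
      rw [hFapp, Real.exp_add, Real.exp_log (hcpos u)]
    rw [← Real.exp_le_exp, e3, e3]
    exact hm
  set r : ℝ := Real.log lam with hrdef
  have hlamexp : Real.exp r = lam := Real.exp_log hlampos
  have hclin : ∀ t : ℝ, 0 ≤ t → c t = Real.exp (r * t) := by
    intro t ht
    have hFt := additive_linear F hFadd hFmono t ht
    have hF1 : F 1 = a + Real.log lam := by
      rw [hFapp, hc1, one_mul]
    rw [hFapp, hF1] at hFt
    have hexpand : t * (a + Real.log lam) = t * a + t * Real.log lam := by ring
    rw [hexpand] at hFt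
    have hlog : Real.log (c t) = r * t := by
      rw [hrdef]; linarith [mul_comm t (Real.log lam)]
    rw [← Real.exp_log (hcpos t), hlog]
  -- second application of discretePF to Aᵀ, to get the action on w
  obtain ⟨lam2, v2, w2, C2, θ2, hlam2pos, hv2pos, hw2pos, hC2, hθ2pos, hθ2lt1, hAv2, hATw2,
    hwv2, hest2⟩ := discretePF hn Aᵀ (fun i j => hApos j i)
  have hv2v : 0 < v2 ⬝ᵥ v :=
    Finset.sum_pos (fun j _ => mul_pos (hv2pos j) (hvpos j)) Finset.univ_nonempty
  have hlam2 : lam2 = lam := by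
    have e1 : v2 ⬝ᵥ (A *ᵥ v) = lam * (v2 ⬝ᵥ v) := by
      rw [hAv, dotProduct_smul, smul_eq_mul]
    have e2 : v2 ⬝ᵥ (A *ᵥ v) = lam2 * (v2 ⬝ᵥ v) := by
      rw [Matrix.dotProduct_mulVec, ← Matrix.mulVec_transpose, hAv2,
        smul_dotProduct, smul_eq_mul]
    exact mul_right_cancel₀ (ne_of_gt hv2v) (e2.symm.trans e1)
  have hsimple2 : ∀ u : Fin n → ℝ, Aᵀ *ᵥ u = lam • u → u = (w2 ⬝ᵥ u) • v2 := by
    intro u hu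
    apply simple_of_estimate Aᵀ lam2 (ne_of_gt hlam2pos) v2 w2 C2 θ2 (le_of_lt hθ2pos)
      hθ2lt1 hest2
    rw [hlam2]; exact hu
  have hw_v2 : w = (w2 ⬝ᵥ w) • v2 := hsimple2 w hATw
  have hEw_eigen : ∀ s : ℝ, Aᵀ *ᵥ (NormedSpace.exp (s • Q) *ᵥ w) =
      lam • (NormedSpace.exp (s • Q) *ᵥ w) := by
    intro s
    have hBsT : (B s)ᵀ = NormedSpace.exp (s • Q) := by
      rw [hBapp]; exact Matrix.transpose_transpose _
    have hcommE : Aᵀ * NormedSpace.exp (s • Q) = NormedSpace.exp (s • Q) * Aᵀ := by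
      have h := congrArg Matrix.transpose (hBA s)
      rw [Matrix.transpose_mul, Matrix.transpose_mul, hBsT] at h
      exact h.symm
    rw [Matrix.mulVec_mulVec, hcommE, ← Matrix.mulVec_mulVec, hATw, Matrix.mulVec_smul]
  have hEsw : ∀ s : ℝ, NormedSpace.exp (s • Q) *ᵥ w = c s • w := by
    intro s
    have h1 : NormedSpace.exp (s • Q) *ᵥ w =
        (w2 ⬝ᵥ (NormedSpace.exp (s • Q) *ᵥ w)) • v2 := hsimple2 _ (hEw_eigen s)
    have hBsT : (B s)ᵀ = NormedSpace.exp (s • Q) := by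
      rw [hBapp]; exact Matrix.transpose_transpose _
    have h2 : (NormedSpace.exp (s • Q) *ᵥ w) ⬝ᵥ v = c s := by
      calc (NormedSpace.exp (s • Q) *ᵥ w) ⬝ᵥ v
          = v ⬝ᵥ (NormedSpace.exp (s • Q) *ᵥ w) := dotProduct_comm _ _
        _ = (v ᵥ* NormedSpace.exp (s • Q)) ⬝ᵥ w := Matrix.dotProduct_mulVec _ _ _
        _ = ((NormedSpace.exp (s • Q))ᵀ *ᵥ v) ⬝ᵥ w := by
            rw [Matrix.mulVec_transpose]
        _ = (B s *ᵥ v) ⬝ᵥ w := by rw [← hBapp]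
        _ = (c s • v) ⬝ᵥ w := by rw [hBv]
        _ = c s * (v ⬝ᵥ w) := by rw [smul_dotProduct, smul_eq_mul]
        _ = c s * (w ⬝ᵥ v) := by rw [dotProduct_comm]
        _ = c s := by rw [hwv, mul_one]
    set δ := w2 ⬝ᵥ w with hδdef
    set γ := w2 ⬝ᵥ (NormedSpace.exp (s • Q) *ᵥ w) with hγdef
    have h3 : γ * (v2 ⬝ᵥ v) = c s := by
      rw [← h2, h1, smul_dotProduct, smul_eq_mul]
    have h4 : δ * (v2 ⬝ᵥ v) = 1 := by
      have h5 := hwv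
      rw [hw_v2, smul_dotProduct, smul_eq_mul] at h5
      exact h5
    have h6 : γ = c s * δ := by
      have h7 : γ * (v2 ⬝ᵥ v) = (c s * δ) * (v2 ⬝ᵥ v) := by
        rw [h3, mul_assoc, h4, mul_one]
      exact mul_right_cancel₀ (ne_of_gt hv2v) h7
    rw [h1, h6, mul_smul, ← hw_v2]
  -- constants
  set K : ℝ := n * Real.exp (n * entryBound Q) with hKdef
  have hnR : (0:ℝ) < n := by exact_mod_cast hn
  have hKpos : 0 < K := by
    rw [hKdef]; positivity
  have hEbound : ∀ s : ℝ, |s| ≤ 1 → ∀ y : Fin n → ℝ, ‖B s *ᵥ y‖ ≤ K * ‖y‖ := by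
    intro s hs y
    have h := mulVec_norm_le (B s) (Real.exp ((n:ℝ) * entryBound Q))
      (le_of_lt (Real.exp_pos _)) ?_ y
    · rw [hKdef]; exact h
    · intro i j
      rw [hBapp, Matrix.transpose_apply]
      exact exp_smul_entry_bound Q s hs j i
  set ε : ℝ := -Real.log θ with hεdef
  have hεpos : 0 < ε := by
    rw [hεdef]; have := Real.log_neg hθpos hθlt1; linarith
  have hθexp : θ = Real.exp (-ε) := by rw [hεdef, neg_neg, Real.exp_log hθpos]
  set C : ℝ := C0 * K * Real.exp |r| * Real.exp ε with hCdef
  refine ⟨r, v, w, C, ε, hvpos, hwpos, by rw [hCdef]; positivity, hεpos, ?_⟩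
  intro x t ht
  set k : ℕ := Nat.floor t with hk
  set s : ℝ := t - k with hs
  have hs0 : 0 ≤ s := by rw [hs]; have := Nat.floor_le ht; rw [← hk] at this; linarith
  have hs1 : s < 1 := by
    rw [hs]; have := Nat.lt_floor_add_one t; rw [← hk] at this; linarith
  have hts : t = (k:ℝ) + s := by rw [hs]; ring
  set y : Fin n → ℝ := B s *ᵥ x with hy
  have hsplit : x ᵥ* NormedSpace.exp (t • Q) = (A ^ k) *ᵥ y := by
    rw [← Matrix.mulVec_transpose]
    show B t *ᵥ x = (A ^ k) *ᵥ y
    rw [hts, ← hBmul, ← Matrix.mulVec_mulVec, hBnat, hy]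
  have hwy : w ⬝ᵥ y = Real.exp (r * s) * (w ⬝ᵥ x) := by
    rw [hy]
    calc w ⬝ᵥ (B s *ᵥ x) = (w ᵥ* B s) ⬝ᵥ x := Matrix.dotProduct_mulVec _ _ _
      _ = ((B s)ᵀ *ᵥ w) ⬝ᵥ x := by rw [Matrix.mulVec_transpose]
      _ = (NormedSpace.exp (s • Q) *ᵥ w) ⬝ᵥ x := by
          rw [hBapp, Matrix.transpose_transpose]
      _ = (c s • w) ⬝ᵥ x := by rw [hEsw]
      _ = c s * (w ⬝ᵥ x) := by rw [smul_dotProduct, smul_eq_mul]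
      _ = Real.exp (r * s) * (w ⬝ᵥ x) := by rw [hclin s hs0]
  have hexp_rt : Real.exp (-r * t) = Real.exp (-r * s) * (lam ^ k)⁻¹ := by
    have e1 : lam ^ k = Real.exp ((k:ℝ) * r) := by rw [Real.exp_nat_mul, hlamexp]
    rw [hts, e1, ← Real.exp_neg, ← Real.exp_add]
    congr 1
    ring
  have hmain : Real.exp (-r * t) • ((A ^ k) *ᵥ y) - (w ⬝ᵥ x) • v =
      Real.exp (-r * s) • ((lam ^ k)⁻¹ • ((A ^ k) *ᵥ y) - (w ⬝ᵥ y) • v) := by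
    rw [smul_sub, smul_smul, smul_smul, ← hexp_rt, hwy]
    congr 2
    rw [← mul_assoc, ← Real.exp_add]
    have : -r * s + r * s = 0 := by ring
    rw [this, Real.exp_zero, one_mul]
  rw [hsplit, hmain, norm_smul, Real.norm_eq_abs, Real.abs_exp]
  have h1 : ‖(lam ^ k)⁻¹ • ((A ^ k) *ᵥ y) - (w ⬝ᵥ y) • v‖ ≤ C0 * θ ^ k * ‖y‖ := hest y k
  have h2 : ‖y‖ ≤ K * ‖x‖ := by
    rw [hy]; exact hEbound s (by rw [abs_of_nonneg hs0]; linarith) x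
  have h3 : Real.exp (-r * s) ≤ Real.exp |r| := by
    apply Real.exp_le_exp.mpr
    calc -r * s ≤ |(-r) * s| := le_abs_self _
      _ = |r| * s := by rw [abs_mul, abs_neg, abs_of_nonneg hs0]
      _ ≤ |r| * 1 := mul_le_mul_of_nonneg_left (le_of_lt hs1) (abs_nonneg r)
      _ = |r| := mul_one _
  have h4 : θ ^ k ≤ Real.exp ε * Real.exp (-ε * t) := by
    rw [hθexp, ← Real.exp_nat_mul, ← Real.exp_add]
    apply Real.exp_le_exp.mpr
    have hk1 : t - 1 < (k:ℝ) := by linarith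
    nlinarith [hεpos, hk1]
  calc Real.exp (-r * s) * ‖(lam ^ k)⁻¹ • ((A ^ k) *ᵥ y) - (w ⬝ᵥ y) • v‖
      ≤ Real.exp |r| * (C0 * θ ^ k * (K * ‖x‖)) := by
        apply mul_le_mul h3 _ (norm_nonneg _) (le_of_lt (Real.exp_pos _))
        calc ‖(lam ^ k)⁻¹ • ((A ^ k) *ᵥ y) - (w ⬝ᵥ y) • v‖ ≤ C0 * θ ^ k * ‖y‖ := h1
          _ ≤ C0 * θ ^ k * (K * ‖x‖) := by
              apply mul_le_mul_of_nonneg_left h2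
              positivity
    _ ≤ Real.exp |r| * (C0 * (Real.exp ε * Real.exp (-ε*t)) * (K * ‖x‖)) := by
        apply mul_le_mul_of_nonneg_left _ (le_of_lt (Real.exp_pos _))
        apply mul_le_mul_of_nonneg_right _ (by positivity)
        exact mul_le_mul_of_nonneg_left h4 hC0
    _ = C * Real.exp (-ε * t) * ‖x‖ := by rw [hCdef]; ring
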